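/- arXiv:2108.06284 — 4 statements merged into one kernel-verified Lean document; each statement's English description precedes it below -/
import Mathlib

section
/- Let ξ ∈ ℝ with −6 < ξ < 6. Then every complex solution z of 3z⁴ + ξz² + 3 = 0 satisfies |z| = 1, Re z ≠ 0 and Im z ≠ 0; that is, for −6 < ξ < 6 the four non-fixed saddle points of the phase function θ lie on the unit circle and are away from both the real and the imaginary axes. -/
/-- For −6 < ξ < 6, every complex solution of 3z⁴ + ξz² + 3 = 0 lies on the unit circle
and is away from both the real and the imaginary axes. -/
theorem stmt_2 (ξ : ℝ) (h1 : -6 < ξ) (h2 : ξ < 6) (z : ℂ)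
    (hz : 3*z^4 + (ξ : ℂ)*z^2 + 3 = 0) :
    ‖z‖ = 1 ∧ z.re ≠ 0 ∧ z.im ≠ 0 := by
  have hre := congrArg Complex.re hz
  have him := congrArg Complex.im hz
  simp [Complex.add_re, Complex.add_im, Complex.mul_re, Complex.mul_im, pow_succ,
    Complex.ofReal_re, Complex.ofReal_im] at hre him
  have hx : z.re ≠ 0 := by
    intro hx0
    rw [hx0] at hre
    nlinarith [sq_nonneg (6*z.im^2 - ξ), sq_nonneg (6*z.im^2 + ξ),
      mul_pos (show (0:ℝ) < 6 - ξ by linarith) (show (0:ℝ) < 6 + ξ by linarith)]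
  have hy : z.im ≠ 0 := by
    intro hy0
    rw [hy0] at hre
    nlinarith [sq_nonneg (6*z.re^2 - ξ), sq_nonneg (6*z.re^2 + ξ),
      mul_pos (show (0:ℝ) < 6 - ξ by linarith) (show (0:ℝ) < 6 + ξ by linarith)]
  have hs : 6*z.re^2 - 6*z.im^2 + ξ = 0 := by
    have hfac : z.re*z.im*(12*z.re^2 - 12*z.im^2 + 2*ξ) = 0 := by linear_combination him
    have hne := mul_ne_zero hx hy
    have h3 : (12*z.re^2 - 12*z.im^2 + 2*ξ) = 0 := by
      rcases mul_eq_zero.mp hfac with h | h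
      · exact absurd h hne
      · exact h
    linarith
  have hsum : (z.re^2 + z.im^2)^2 = 1 := by
    linear_combination (-(1:ℝ)/3)*hre + ((z.re^2-z.im^2)/3)*hs
  have hnn : (0:ℝ) ≤ z.re^2 + z.im^2 := by positivity
  have hs1 : z.re^2 + z.im^2 = 1 := by nlinarith [sq_nonneg (z.re^2+z.im^2-1), sq_nonneg (z.re^2+z.im^2+1)]
  refine ⟨?_, hx, hy⟩
  have ha : ‖z‖ ^ 2 = 1 := by
    rw [Complex.sq_norm, Complex.normSq_apply]
    linarith [hs1]
  have hfac : (‖z‖ - 1)*(‖z‖ + 1) = 0 := by linear_combination ha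
  rcases mul_eq_zero.mp hfac with h | h
  · linarith
  · have := norm_nonneg z
    linarith
end

section
/- Let ξ ∈ ℝ with ξ < −6 and let φ ∈ (0, π/3). Set α = 3 − (ξ + 3)/(1 + 2 cos(2φ)) and l₁ = (√α − √(α − 4))/2. Then α > 4, and for every l with 0 < l < l₁ one has Im θ(l e^{iφ}) > 0 and Im θ(l e^{−iφ}) < 0. -/
set_option maxHeartbeats 1000000


open Complex in
lemma im_aux (ξ l c s : ℝ) (hl : l ≠ 0) (hcs : c^2 + s^2 = 1) :
    (((1/2 : ℂ) * (((l:ℂ)*((c:ℂ)+(s:ℂ)*I)) - 1/((l:ℂ)*((c:ℂ)+(s:ℂ)*I))) *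
      ((ξ : ℂ) + 2 + (((l:ℂ)*((c:ℂ)+(s:ℂ)*I)) + 1/((l:ℂ)*((c:ℂ)+(s:ℂ)*I)))^2)).im) =
    (1/2)*(l+1/l)*s*((4*c^2-1)*((1/l-l)^2) + (ξ+3) + (4*c^2-1)) := by
  have hc1 : (c:ℂ)^2 + (s:ℂ)^2 = 1 := by exact_mod_cast hcs
  have hlc : (l:ℂ) ≠ 0 := by exact_mod_cast hl
  have hinv : 1/((l:ℂ)*((c:ℂ)+(s:ℂ)*I)) = (1/(l:ℂ))*((c:ℂ)-(s:ℂ)*I) := by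
    rw [one_div, inv_eq_of_mul_eq_one_right]
    field_simp
    linear_combination hc1 - (s:ℂ)^2*Complex.I_sq
  rw [hinv]
  simp only [Complex.mul_im, Complex.mul_re, Complex.add_im, Complex.add_re,
    Complex.sub_im, Complex.sub_re, Complex.I_re, Complex.I_im, Complex.ofReal_re,
    Complex.ofReal_im, pow_two, Complex.one_re, Complex.one_im, Complex.div_re,
    Complex.div_im, Complex.normSq_apply, Complex.re_ofNat, Complex.im_ofNat]
  field_simp
  linear_combination (s*(-4*l^6+4*l^8+4*l^10-4*l^12)) * hcs

/-- For ξ < −6 and φ ∈ (0, π/3), setting α = 3 − (ξ+3)/(1 + 2cos 2φ) and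
l₁ = (√α − √(α−4))/2, one has α > 4 and for every 0 < l < l₁:
Im θ(l e^{iφ}) > 0 and Im θ(l e^{−iφ}) < 0. -/
theorem stmt_8 (ξ φ : ℝ) (hξ : ξ < -6) (hφ : φ ∈ Set.Ioo 0 (Real.pi/3))
    (θ : ℂ → ℂ)
    (hθ : θ = fun z : ℂ => (1/2 : ℂ) * (z - 1/z) * ((ξ : ℂ) + 2 + (z + 1/z)^2))
    (α l₁ : ℝ)
    (hα : α = 3 - (ξ + 3) / (1 + 2 * Real.cos (2*φ)))
    (hl₁ : l₁ = (Real.sqrt α - Real.sqrt (α - 4)) / 2) :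
    4 < α ∧
    ∀ l : ℝ, 0 < l → l < l₁ →
      0 < (θ ((l : ℂ) * Complex.exp (Complex.I * (φ : ℂ)))).im ∧
      (θ ((l : ℂ) * Complex.exp (-(Complex.I * (φ : ℂ))))).im < 0 := by
  obtain ⟨hφ0, hφ3⟩ := hφ
  set c := Real.cos φ with hc
  set s := Real.sin φ with hs
  have hpi := Real.pi_pos
  have hs0 : 0 < s := Real.sin_pos_of_pos_of_lt_pi hφ0 (by linarith)
  have hc12 : 1/2 < c := by
    have := Real.cos_lt_cos_of_nonneg_of_le_pi (le_of_lt hφ0) (by linarith) hφ3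
    simpa [Real.cos_pi_div_three] using this
  have hcs : c^2 + s^2 = 1 := by
    have := Real.sin_sq_add_cos_sq φ; linarith
  have hcos2 : 1 + 2 * Real.cos (2*φ) = 4*c^2 - 1 := by
    rw [Real.cos_two_mul]; ring
  set D : ℝ := 4*c^2 - 1 with hD
  have hDpos : 0 < D := by nlinarith
  have hD3 : D ≤ 3 := by nlinarith
  have hαD : α = 3 - (ξ+3)/D := by rw [hα, hcos2]
  have hα4 : 4 < α := by
    have h1 : (ξ+3)/D < -1 := by
      rw [div_lt_iff₀ hDpos]; nlinarith
    rw [hαD]; linarith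
  have ha : Real.sqrt α ^ 2 = α := Real.sq_sqrt (by linarith)
  have hb : Real.sqrt (α-4) ^ 2 = α - 4 := Real.sq_sqrt (by linarith)
  have hbnn : 0 ≤ Real.sqrt (α-4) := Real.sqrt_nonneg _
  have hl₁pos : 0 < l₁ := by
    rw [hl₁]
    have : Real.sqrt (α-4) < Real.sqrt α := by
      apply Real.sqrt_lt_sqrt (by linarith) (by linarith)
    linarith
  have hmul : l₁ * ((Real.sqrt α + Real.sqrt (α-4))/2) = 1 := by
    rw [hl₁]; linear_combination ha/4 - hb/4
  have hrecip : 1/l₁ - l₁ = Real.sqrt (α-4) := by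
    have h2 : (Real.sqrt α + Real.sqrt (α-4))/2 = 1/l₁ :=
      eq_one_div_of_mul_eq_one_right hmul
    rw [← h2, hl₁]; ring
  refine ⟨hα4, fun l hl0 hll₁ => ?_⟩
  have hlne : l ≠ 0 := ne_of_gt hl0
  have hgap : Real.sqrt (α-4) < 1/l - l := by
    have h1 : 1/l₁ < 1/l := one_div_lt_one_div_of_lt hl0 hll₁
    linarith [hrecip]
  have hsq : α - 4 < (1/l - l)^2 := by nlinarith
  have hξ3 : ξ + 3 = (3-α)*D := by
    rw [hαD]; field_simp; ring
  have hbr : 0 < D*((1/l-l)^2) + (ξ+3) + D := by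
    rw [hξ3]; nlinarith
  have he1 : Complex.exp (Complex.I * (φ:ℂ)) = (c:ℂ) + (s:ℂ)*Complex.I := by
    rw [mul_comm, Complex.exp_mul_I, ← Complex.ofReal_cos, ← Complex.ofReal_sin]
  have he2 : Complex.exp (-(Complex.I * (φ:ℂ))) = (c:ℂ) + ((-s:ℝ):ℂ)*Complex.I := by
    have h3 : -(Complex.I * (φ:ℂ)) = ((-φ:ℝ):ℂ) * Complex.I := by push_cast; ring
    rw [h3, Complex.exp_mul_I, ← Complex.ofReal_cos, ← Complex.ofReal_sin,
      Real.cos_neg, Real.sin_neg]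
  have key1 := im_aux ξ l c s hlne hcs
  have key2 := im_aux ξ l c (-s) hlne (by nlinarith)
  have h4 : 0 < l + 1/l := by positivity
  have hP := mul_pos (mul_pos (mul_pos (by norm_num : (0:ℝ) < 1/2) h4) hs0) hbr
  constructor
  · rw [hθ]; simp only [he1]
    rw [key1]
    nlinarith [hP]
  · rw [hθ]; simp only [he2]
    rw [key2]
    nlinarith [hP]
end

section
/- For every ξ ∈ ℝ, every φ with 0 < φ ≤ π/4, and every l > 0, the phase function satisfies Im θ(l e^{iφ}) ≥ (1/2) F(l) sin φ · (ξ + F(l)²) and Im θ(l e^{−iφ}) ≤ −(1/2) F(l) sin φ · (ξ + F(l)²), where F(l) = l + 1/l. In particular, if ξ > 0 then Im θ > 0 on the whole ray {l e^{iφ} : l > 0} and Im θ < 0 on {l e^{−iφ} : l > 0}. -/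
open Complex Real

lemma key (ξ c s l : ℝ) (hl : 0 < l) (hs : 0 < s) (hcs : s ≤ c) (h1 : s^2 + c^2 = 1) :
    (1/2) * (l + 1/l) * s * (ξ + (l + 1/l)^2)
      ≤ ((1/2 : ℂ) * (((l:ℂ) * ((c:ℂ) + (s:ℂ)*Complex.I)) - ((l⁻¹:ℝ):ℂ) * ((c:ℂ) - (s:ℂ)*Complex.I))
          * ((ξ : ℂ) + 2 + (((l:ℂ) * ((c:ℂ) + (s:ℂ)*Complex.I)) + ((l⁻¹:ℝ):ℂ) * ((c:ℂ) - (s:ℂ)*Complex.I))^2)).im := by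
  have hl' : l ≠ 0 := hl.ne'
  rw [show (1/2:ℂ) = (((1/2:ℝ)):ℂ) by norm_num]
  simp only [Complex.mul_im, Complex.mul_re, Complex.add_im, Complex.add_re, Complex.sub_im,
    Complex.sub_re, Complex.ofReal_re, Complex.ofReal_im, Complex.I_re, Complex.I_im,
    Complex.one_re, Complex.one_im, pow_two, Complex.re_ofNat, Complex.im_ofNat]
  rw [one_div, one_div]
  ring_nf
  have h2 : l * l⁻¹ = 1 := mul_inv_cancel₀ hl'
  have hc : 0 < c := lt_of_lt_of_le hs hcs
  have hcs2 : s^2 ≤ c^2 := by nlinarith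
  have hkey : l^3*s*c^2 + l⁻¹^3*s*c^2 - l^3*s^3 - l⁻¹^3*s^3 ≥ 0 := by
    have : s * (c^2 - s^2) * (l^3 + l⁻¹^3) ≥ 0 := by
      apply mul_nonneg (mul_nonneg hs.le (by linarith)); positivity
    nlinarith [this]
  have hv1 : l*s^3 + l*s*c^2 = l*s := by linear_combination (l*s)*h1
  have hv2 : l⁻¹*s^3 + l⁻¹*s*c^2 = l⁻¹*s := by linear_combination (l⁻¹*s)*h1
  have hv3 : l^3*s^3 + l^3*s*c^2 = l^3*s := by linear_combination (l^3*s)*h1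
  have hv4 : l⁻¹^3*s^3 + l⁻¹^3*s*c^2 = l⁻¹^3*s := by linear_combination (l⁻¹^3*s)*h1
  have hA1 : l*l⁻¹^2*s*c^2 = l⁻¹*s*c^2 := by field_simp
  have hA2 : l*l⁻¹^2*s^3 = l⁻¹*s^3 := by field_simp
  have hA3 : l^2*l⁻¹*s*c^2 = l*s*c^2 := by field_simp
  have hA4 : l^2*l⁻¹*s^3 = l*s^3 := by field_simp
  have hA5 : l*l⁻¹^2*s = l⁻¹*s := by field_simp
  have hA6 : l^2*l⁻¹*s = l*s := by field_simp
  linarith [hkey, hv1, hv2, hv3, hv4, hA1, hA2, hA3, hA4, hA5, hA6]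

/-- For every ξ, every φ ∈ (0, π/4] and every l > 0:
Im θ(l e^{iφ}) ≥ (1/2)F(l) sin φ (ξ + F(l)²) and Im θ(l e^{−iφ}) ≤ −(1/2)F(l) sin φ (ξ + F(l)²),
with F(l) = l + 1/l; in particular for ξ > 0 the imaginary part is positive on the upper ray
and negative on the lower ray. -/
theorem stmt_9 (ξ φ l : ℝ) (hφ1 : 0 < φ) (hφ2 : φ ≤ Real.pi/4) (hl : 0 < l)
    (θ : ℂ → ℂ)
    (hθ : θ = fun z : ℂ => (1/2 : ℂ) * (z - 1/z) * ((ξ : ℂ) + 2 + (z + 1/z)^2)) :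
    (1/2) * (l + 1/l) * Real.sin φ * (ξ + (l + 1/l)^2)
        ≤ (θ ((l : ℂ) * Complex.exp (Complex.I * (φ : ℂ)))).im ∧
    (θ ((l : ℂ) * Complex.exp (-(Complex.I * (φ : ℂ))))).im
        ≤ -((1/2) * (l + 1/l) * Real.sin φ * (ξ + (l + 1/l)^2)) ∧
    (0 < ξ →
      0 < (θ ((l : ℂ) * Complex.exp (Complex.I * (φ : ℂ)))).im ∧
      (θ ((l : ℂ) * Complex.exp (-(Complex.I * (φ : ℂ))))).im < 0) := by
  set c := Real.cos φ with hcdef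
  set s := Real.sin φ with hsdef
  have hs : 0 < s := Real.sin_pos_of_pos_of_lt_pi hφ1 (by linarith [Real.pi_gt_three])
  have hc : 0 < c := Real.cos_pos_of_mem_Ioo ⟨by linarith [Real.pi_pos], by
    have := Real.pi_pos; linarith⟩
  have hsc : s ≤ c := by
    rw [hsdef, hcdef, ← Real.sin_pi_div_two_sub]
    apply Real.sin_le_sin_of_le_of_le_pi_div_two (by linarith) (by linarith) (by linarith)
  have h1 : s^2 + c^2 = 1 := Real.sin_sq_add_cos_sq φ
  have e1 : (l : ℂ) * Complex.exp (Complex.I * (φ : ℂ)) = (l:ℂ) * ((c:ℂ) + (s:ℂ)*Complex.I) := by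
    rw [mul_comm Complex.I, Complex.exp_mul_I]
    simp [hcdef, hsdef, ← Complex.ofReal_cos, ← Complex.ofReal_sin]
  have e1' : (l : ℂ) * Complex.exp (-(Complex.I * (φ : ℂ))) = (l:ℂ) * ((c:ℂ) - (s:ℂ)*Complex.I) := by
    have : -(Complex.I * (φ:ℂ)) = ((-φ : ℝ):ℂ) * Complex.I := by push_cast; ring
    rw [this, Complex.exp_mul_I]
    simp [hcdef, hsdef, ← Complex.ofReal_cos, ← Complex.ofReal_sin, sub_eq_add_neg]
  have h1C : (s:ℂ)^2 + (c:ℂ)^2 = 1 := by norm_cast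
  have h2C : (l:ℂ) * ((l⁻¹:ℝ):ℂ) = 1 := by norm_cast; exact mul_inv_cancel₀ hl.ne'
  have e2 : 1 / ((l:ℂ) * ((c:ℂ) + (s:ℂ)*Complex.I)) = ((l⁻¹:ℝ):ℂ) * ((c:ℂ) - (s:ℂ)*Complex.I) := by
    rw [eq_comm, eq_div_iff]
    · linear_combination ((c:ℂ)^2 - (s:ℂ)^2*Complex.I^2)*h2C + h1C - (s:ℂ)^2*Complex.I_sq
    · intro h
      have : ((l:ℂ) * ((c:ℂ) + (s:ℂ)*Complex.I)).im = 0 := by rw [h]; simp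
      simp [Complex.mul_im] at this
      rcases this with h' | h' <;> [exact hl.ne' (by exact_mod_cast h'); exact hs.ne' (by exact_mod_cast h')]
  have e2' : 1 / ((l:ℂ) * ((c:ℂ) - (s:ℂ)*Complex.I)) = ((l⁻¹:ℝ):ℂ) * ((c:ℂ) + (s:ℂ)*Complex.I) := by
    rw [eq_comm, eq_div_iff]
    · linear_combination ((c:ℂ)^2 - (s:ℂ)^2*Complex.I^2)*h2C + h1C - (s:ℂ)^2*Complex.I_sq
    · intro h
      have : ((l:ℂ) * ((c:ℂ) - (s:ℂ)*Complex.I)).im = 0 := by rw [h]; simp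
      simp [Complex.mul_im, Complex.sub_im, Complex.sub_re] at this
      rcases this with h' | h' <;> [exact hl.ne' (by exact_mod_cast h'); exact hs.ne' (by exact_mod_cast h')]
  have himup : (1/2) * (l + 1/l) * s * (ξ + (l + 1/l)^2)
      ≤ (θ ((l : ℂ) * Complex.exp (Complex.I * (φ : ℂ)))).im := by
    rw [hθ]; simp only [e1, e2]
    exact key ξ c s l hl hs hsc h1
  have hconj : θ ((l:ℂ) * ((c:ℂ) - (s:ℂ)*Complex.I))
      = starRingEnd ℂ (θ ((l:ℂ) * ((c:ℂ) + (s:ℂ)*Complex.I))) := by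
    rw [hθ]
    simp only [map_mul, map_sub, map_add, map_div₀, map_pow, map_one, map_ofNat,
      Complex.conj_ofReal, Complex.conj_I]
    norm_num
    ring_nf
  have himdown : (θ ((l : ℂ) * Complex.exp (-(Complex.I * (φ : ℂ))))).im
      ≤ -((1/2) * (l + 1/l) * s * (ξ + (l + 1/l)^2)) := by
    rw [e1', hconj, Complex.conj_im]
    have := himup
    rw [hθ] at this ⊢
    simp only [e1, e2] at this ⊢
    linarith
  refine ⟨himup, himdown, fun hξ => ⟨lt_of_lt_of_le ?_ himup, lt_of_le_of_lt himdown ?_⟩⟩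
  · have hF : 0 < l + 1/l := by positivity
    have : 0 < ξ + (l + 1/l)^2 := by positivity
    positivity
  · have hF : 0 < l + 1/l := by positivity
    have : 0 < ξ + (l + 1/l)^2 := by positivity
    have : 0 < (1/2) * (l + 1/l) * s * (ξ + (l + 1/l)^2) := by positivity
    linarith
end

section
/- Let Γ ⊆ ℝ be a measurable set, let ρ ∈ [0, 1), and let r : ℝ → ℂ be measurable with |r(s)| ≤ ρ for all s ∈ Γ. Set ν(s) = −(1/(2π)) log(1 − |r(s)|²) ≥ 0 and assume that ν is integrable on Γ and that s ↦ ν(s)/s is integrable on Γ. Define δ(z) = exp(−i ∫_Γ ν(s)(1/(s − z) − 1/(2s)) ds) for Im z ≠ 0. Then for every z ∈ ℂ with Im z ≠ 0 one has (1 − ρ²)^{1/2} ≤ |δ(z)| ≤ (1 − ρ²)^{−1/2}. -/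
open MeasureTheory

/-- Uniform bound for the partial transmission function: if |r| ≤ ρ < 1 on Γ and
δ(z) = exp(−i ∫_Γ ν(s)(1/(s−z) − 1/(2s)) ds) with ν(s) = −(1/(2π)) log(1 − |r(s)|²),
then (1 − ρ²)^{1/2} ≤ |δ(z)| ≤ (1 − ρ²)^{−1/2} for all z off the real axis. -/
theorem stmt_11 (Γ : Set ℝ) (hΓ : MeasurableSet Γ) (ρ : ℝ) (hρ0 : 0 ≤ ρ) (hρ1 : ρ < 1)
    (r : ℝ → ℂ) (hr : Measurable r) (hrρ : ∀ s ∈ Γ, ‖r s‖ ≤ ρ)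
    (ν : ℝ → ℝ)
    (hν : ν = fun s => -(1/(2*Real.pi)) * Real.log (1 - ‖r s‖^2))
    (hint1 : IntegrableOn ν Γ)
    (hint2 : IntegrableOn (fun s => ν s / s) Γ)
    (δ : ℂ → ℂ)
    (hδ : δ = fun z => Complex.exp (-Complex.I *
      ∫ s in Γ, (ν s : ℂ) * (1/((s : ℂ) - z) - 1/(2*(s : ℂ)))))
    (z : ℂ) (hz : z.im ≠ 0) :
    Real.sqrt (1 - ρ^2) ≤ ‖δ z‖ ∧
      ‖δ z‖ ≤ (Real.sqrt (1 - ρ^2))⁻¹ := by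
  have hπ : (0:ℝ) < Real.pi := Real.pi_pos
  set x := z.re with hxdef
  set y := z.im with hydef
  have hy0 : 0 < |y| := abs_pos.mpr hz
  have hρ2 : 0 < 1 - ρ^2 := by nlinarith
  set c : ℝ := -(Real.log (1 - ρ^2)) / (2*Real.pi) with hcdef
  have hc0 : 0 ≤ c := by
    have : Real.log (1-ρ^2) ≤ 0 := Real.log_nonpos (by linarith) (by nlinarith)
    apply div_nonneg (by linarith) (by positivity)
  -- pointwise ν bounds on Γ
  have hνb : ∀ s ∈ Γ, 0 ≤ ν s ∧ ν s ≤ c := by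
    intro s hs
    have h0 : 0 ≤ ‖r s‖ := norm_nonneg (r s)
    have h1 : ‖r s‖ ≤ ρ := hrρ s hs
    have h2 : ‖r s‖^2 ≤ ρ^2 := by nlinarith
    have h4 : Real.log (1 - ‖r s‖^2) ≤ 0 :=
      Real.log_nonpos (by nlinarith) (by nlinarith)
    have h5 : Real.log (1-ρ^2) ≤ Real.log (1 - ‖r s‖^2) :=
      Real.log_le_log hρ2 (by linarith)
    have h6 : (0:ℝ) < 2*Real.pi := by positivity
    constructor
    · rw [hν]; dsimp only
      rw [neg_mul, neg_nonneg]
      exact mul_nonpos_of_nonneg_of_nonpos (by positivity) h4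
    · rw [hν]; dsimp only
      rw [hcdef, neg_mul, neg_div, neg_le_neg_iff, div_eq_inv_mul, one_div]
      exact mul_le_mul_of_nonneg_left h5 (by positivity)
  -- the integrand
  set f : ℝ → ℂ := fun s => (ν s : ℂ) * (1/((s : ℂ) - z) - 1/(2*(s : ℂ))) with hfdef
  -- integrability of f on Γ
  have hsz : ∀ s : ℝ, ((s:ℂ) - z) ≠ 0 := by
    intro s h
    apply hz
    have := congrArg Complex.im h
    simpa using this
  have hcont : Continuous fun s : ℝ => 1/((s:ℂ) - z) := by
    simp only [one_div]
    exact ((Complex.continuous_ofReal.sub continuous_const).inv₀ hsz)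
  have hbound : ∀ s : ℝ, ‖1/((s:ℂ) - z)‖ ≤ |y|⁻¹ := by
    intro s
    rw [one_div, norm_inv]
    apply inv_anti₀ hy0
    have h1 : |((s:ℂ) - z).im| ≤ ‖(s:ℂ) - z‖ := Complex.abs_im_le_norm _
    have h2 : ((s:ℂ) - z).im = -y := by simp [hydef]
    rw [h2, abs_neg] at h1
    exact h1
  have hg : IntegrableOn (fun s : ℝ => (1/((s:ℂ) - z)) * (ν s : ℂ)) Γ := by
    refine Integrable.bdd_mul ?_ (hcont.aestronglyMeasurable.restrict) (c := |y|⁻¹) (Filter.Eventually.of_forall hbound)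
    exact hint1.ofReal
  have hh : IntegrableOn (fun s : ℝ => (ν s : ℂ) * (1/(2*(s:ℂ)))) Γ := by
    have heq : (fun s : ℝ => (ν s : ℂ) * (1/(2*(s:ℂ)))) =
        fun s : ℝ => ((ν s / s / 2 : ℝ) : ℂ) := by
      funext s
      push_cast
      rw [one_div, mul_inv]
      ring
    rw [heq]
    exact ((hint2.div_const 2).ofReal)
  have hf : IntegrableOn f Γ := by
    have : f = fun s : ℝ => (1/((s:ℂ) - z)) * (ν s : ℂ) - (ν s : ℂ) * (1/(2*(s:ℂ))) := by
      funext s; rw [hfdef]; ring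
    rw [this]
    exact hg.sub hh
  -- imaginary part of integrand
  set den : ℝ → ℝ := fun s => (s - x)^2 + y^2 with hdendef
  have hden_pos : ∀ s : ℝ, 0 < den s := fun s => by positivity
  have him : ∀ s : ℝ, (f s).im = ν s * (y / den s) := by
    intro s
    rw [hfdef]
    have h1 : ((s:ℂ) - z)⁻¹.im = y / den s := by
      rw [Complex.inv_im]
      have : Complex.normSq ((s:ℂ) - z) = den s := by
        simp [Complex.normSq_apply, hdendef, hxdef, hydef]; ring
      rw [this]
      simp [hydef]
    have h2 : (1/(2*(s:ℂ))).im = 0 := by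
      rw [one_div]
      rw [show (2*(s:ℂ)) = ((2*s : ℝ) : ℂ) by push_cast; ring]
      rw [Complex.inv_im]
      simp
    simp only [Complex.mul_im, Complex.ofReal_re, Complex.ofReal_im, Complex.sub_im,
      one_div, h2, zero_mul, add_zero]
    rw [show ((2:ℂ)*(s:ℂ))⁻¹.im = 0 from by rw [← one_div]; exact h2, h1, sub_zero]
  -- |δ z| = exp of imaginary part of integral
  have hre : ∀ w : ℂ, (-Complex.I * w).re = w.im := fun w => by simp [Complex.mul_re]
  have hJ : ‖δ z‖ = Real.exp ((∫ s in Γ, f s).im) := by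
    rw [hδ]
    dsimp only
    rw [Complex.norm_exp, hre]
  have hJim : (∫ s in Γ, f s).im = ∫ s in Γ, ν s * (y / den s) :=
    calc (∫ s in Γ, f s).im = ∫ s in Γ, (f s).im := (integral_im hf).symm
      _ = ∫ s in Γ, ν s * (y / den s) :=
        integral_congr_ae (Filter.Eventually.of_forall fun s => him s)
  -- integrability of dominating function on ℝ
  have hDint : Integrable (fun s : ℝ => c * (|y| / den s)) := by
    have h1 : Integrable (fun t : ℝ => (1 + t^2)⁻¹) := integrable_inv_one_add_sq
    have h2 : Integrable (fun t : ℝ => (1 + (t/y)^2)⁻¹) := h1.comp_div hz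
    have h3 : Integrable (fun t : ℝ => (t^2 + y^2)⁻¹) := by
      refine (h2.const_mul ((y^2)⁻¹)).congr (Filter.Eventually.of_forall fun t => ?_)
      have hy2 : y^2 ≠ 0 := by positivity
      field_simp
      ring
    have h4 : Integrable (fun t : ℝ => ((t - x)^2 + y^2)⁻¹) := h3.comp_sub_right x
    refine (h4.const_mul (c * |y|)).congr (Filter.Eventually.of_forall fun t => ?_)
    rw [hdendef]
    ring
  have hInt_im : IntegrableOn (fun s => ν s * (y / den s)) Γ := by
    refine hf.im.congr (Filter.Eventually.of_forall fun s => him s)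
  -- full-line integral computation
  have key : ∫ s : ℝ, (den s)⁻¹ = Real.pi / |y| := by
    have k1 : ∫ s : ℝ, (den s)⁻¹ = ∫ s : ℝ, (s^2 + y^2)⁻¹ := by
      rw [hdendef]
      exact integral_sub_right_eq_self (fun s => (s^2 + y^2)⁻¹) x
    have k2 : (fun s : ℝ => (s^2 + y^2)⁻¹) = fun s : ℝ => (y^2)⁻¹ * (1 + (s/y)^2)⁻¹ := by
      funext s
      have hy2 : y^2 ≠ 0 := by positivity
      field_simp
      ring
    have k3 : ∫ s : ℝ, (1 + (s/y)^2)⁻¹ = |y| * Real.pi := by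
      rw [MeasureTheory.Measure.integral_comp_div (fun t : ℝ => (1 + t^2)⁻¹) y,
        integral_univ_inv_one_add_sq, smul_eq_mul]
    have hyne : |y| ≠ 0 := hy0.ne'
    rw [k1, k2, integral_const_mul, k3, ← sq_abs y]
    field_simp
  set A := ∫ s in Γ, ν s * (y / den s) with hAdef
  have hA : |A| ≤ c * Real.pi := by
    have step1 : |A| ≤ ∫ s in Γ, |ν s * (y / den s)| := by
      have h := norm_integral_le_integral_norm (μ := volume.restrict Γ)
        (fun s => ν s * (y / den s))
      simp only [Real.norm_eq_abs] at h
      exact h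
    have step2 : ∫ s in Γ, |ν s * (y / den s)| ≤ ∫ s in Γ, c * (|y| / den s) := by
      apply setIntegral_mono_on hInt_im.abs hDint.integrableOn hΓ
      intro s hs
      obtain ⟨hs0, hsc⟩ := hνb s hs
      rw [abs_mul, abs_of_nonneg hs0, abs_div, abs_of_pos (hden_pos s)]
      exact mul_le_mul_of_nonneg_right hsc (by positivity)
    have step3 : ∫ s in Γ, c * (|y| / den s) ≤ ∫ s : ℝ, c * (|y| / den s) :=
      setIntegral_le_integral hDint (Filter.Eventually.of_forall fun s =>
        mul_nonneg hc0 (by positivity))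
    have step4 : ∫ s : ℝ, c * (|y| / den s) = c * Real.pi := by
      have : (fun s : ℝ => c * (|y| / den s)) = fun s : ℝ => (c * |y|) * (den s)⁻¹ := by
        funext s; ring
      rw [this, integral_const_mul, key]
      field_simp
    linarith
  have hcπ : c * Real.pi = -(Real.log (1 - ρ^2)) / 2 := by
    rw [hcdef]
    field_simp
  have hsqrt : Real.sqrt (1 - ρ^2) = Real.exp (Real.log (1 - ρ^2) / 2) := by
    rw [← Real.log_sqrt hρ2.le, Real.exp_log (Real.sqrt_pos.mpr hρ2)]
  rw [abs_le, hcπ] at hA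
  constructor
  · rw [hJ, hJim, hsqrt]
    exact Real.exp_le_exp.mpr (by linarith [hA.1])
  · rw [hJ, hJim, hsqrt, ← Real.exp_neg]
    exact Real.exp_le_exp.mpr (by linarith [hA.2])
end
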